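/- arXiv:1403.1402 — 3 statements merged into one kernel-verified Lean document; each statement's English description precedes it below -/
import Mathlib

section
/- Let J ∈ ℕ, T > 0, and let M : [0,T] → ℝ^{J×J} be continuously differentiable with each M(t) symmetric positive definite, let S, B : [0,T] → ℝ^{J×J} be continuous with each S(t) symmetric positive semidefinite, and suppose there are constants c₁, c₂ ≥ 0 such that for all t ∈ [0,T] and all x ∈ ℝ^J: |M'(t) x·x| ≤ c₁ (M(t) x·x) and |B(t) x·x| ≤ (1/2)(S(t) x·x) + c₂ (M(t) x·x). Let α : [0,T] → ℝ^J be differentiable and satisfy the linear evolution equation (d/dt)(M(t) α(t)) + (S(t) + B(t)) α(t) = 0 for all t ∈ [0,T]. Then for every t ∈ [0,T]: M(t) α(t)·α(t) + ∫_0^t S(s) α(s)·α(s) ds ≤ e^{(c₁+2c₂)t} (M(0) α(0)·α(0)). -/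
open Matrix

/-- L² stability bound for the semidiscrete ALE-ESFEM scheme in matrix–vector form:
if `M` is C¹ with derivative `M'` satisfying `|M' x·x| ≤ c₁ M x·x`, each `M(t)` is
symmetric positive definite, `S, B` are continuous with `S(t)` symmetric positive
semidefinite and `|B x·x| ≤ (1/2) S x·x + c₂ M x·x`, and `α` solves
`(d/dt)(M α) + (S + B) α = 0` on `[0, T]`, then
`M(t)α(t)·α(t) + ∫₀ᵗ S α·α ≤ e^{(c₁+2c₂)t} M(0)α(0)·α(0)`. -/
theorem semidiscrete_L2_stability
    (J : ℕ) (T : ℝ) (hT : 0 < T)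
    (M M' S B : ℝ → Matrix (Fin J) (Fin J) ℝ)
    (hMderiv : ∀ t ∈ Set.Icc (0 : ℝ) T, ∀ i j : Fin J,
      HasDerivWithinAt (fun s => M s i j) (M' t i j) (Set.Icc (0 : ℝ) T) t)
    (hM'cont : ∀ i j : Fin J, ContinuousOn (fun s => M' s i j) (Set.Icc (0 : ℝ) T))
    (hMpd : ∀ t ∈ Set.Icc (0 : ℝ) T, (M t).PosDef)
    (hScont : ∀ i j : Fin J, ContinuousOn (fun s => S s i j) (Set.Icc (0 : ℝ) T))
    (hBcont : ∀ i j : Fin J, ContinuousOn (fun s => B s i j) (Set.Icc (0 : ℝ) T))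
    (hSpsd : ∀ t ∈ Set.Icc (0 : ℝ) T, (S t).PosSemidef)
    (c₁ c₂ : ℝ) (hc₁ : 0 ≤ c₁) (hc₂ : 0 ≤ c₂)
    (hM'bound : ∀ t ∈ Set.Icc (0 : ℝ) T, ∀ x : Fin J → ℝ,
      |(M' t).mulVec x ⬝ᵥ x| ≤ c₁ * ((M t).mulVec x ⬝ᵥ x))
    (hBbound : ∀ t ∈ Set.Icc (0 : ℝ) T, ∀ x : Fin J → ℝ,
      |(B t).mulVec x ⬝ᵥ x| ≤ (1 / 2) * ((S t).mulVec x ⬝ᵥ x)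
        + c₂ * ((M t).mulVec x ⬝ᵥ x))
    (α : ℝ → Fin J → ℝ)
    (hα : DifferentiableOn ℝ α (Set.Icc (0 : ℝ) T))
    (hODE : ∀ t ∈ Set.Icc (0 : ℝ) T,
      HasDerivWithinAt (fun s => (M s).mulVec (α s))
        (-(S t + B t).mulVec (α t)) (Set.Icc (0 : ℝ) T) t) :
    ∀ t ∈ Set.Icc (0 : ℝ) T,
      (M t).mulVec (α t) ⬝ᵥ α t + (∫ s in (0 : ℝ)..t, (S s).mulVec (α s) ⬝ᵥ α s)
        ≤ Real.exp ((c₁ + 2 * c₂) * t) * ((M 0).mulVec (α 0) ⬝ᵥ α 0) := by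
  set I : Set ℝ := Set.Icc (0 : ℝ) T with hIdef
  set α' : ℝ → Fin J → ℝ := fun t => derivWithin α I t with hα'def
  have hα' : ∀ t ∈ I, HasDerivWithinAt α (α' t) I t :=
    fun t ht => (hα t ht).hasDerivWithinAt
  set φ : ℝ → ℝ := fun s => (S s).mulVec (α s) ⬝ᵥ α s with hφdef
  set f : ℝ → ℝ := fun s => (M s).mulVec (α s) ⬝ᵥ α s with hfdef
  -- continuity of coordinates of α
  have hαcont : ∀ j : Fin J, ContinuousOn (fun s => α s j) I :=
    fun j => (continuous_apply j).comp_continuousOn hα.continuousOn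
  -- continuity of φ
  have hφcont : ContinuousOn φ I := by
    simp only [hφdef, Matrix.mulVec, dotProduct]
    exact continuousOn_finset_sum _ fun i _ =>
      (continuousOn_finset_sum _ fun j _ => (hScont i j).mul (hαcont j)).mul (hαcont i)
  -- φ is nonnegative
  have hφnonneg : ∀ s ∈ I, 0 ≤ φ s := by
    intro s hs
    have h0 : 0 ≤ α s ⬝ᵥ (S s) *ᵥ α s := by
      simpa [star_trivial] using (hSpsd s hs).dotProduct_mulVec_nonneg (α s)
    exact h0.trans_eq (dotProduct_comm _ _)
  -- a dot-product derivative rule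
  have hdot : ∀ t ∈ I, ∀ (u v : ℝ → Fin J → ℝ) (u' v' : Fin J → ℝ),
      HasDerivWithinAt u u' I t → HasDerivWithinAt v v' I t →
      HasDerivWithinAt (fun s => u s ⬝ᵥ v s) (u' ⬝ᵥ v t + u t ⬝ᵥ v') I t := by
    intro t ht u v u' v' hu hv
    have h : HasDerivWithinAt (fun s => ∑ i, u s i * v s i)
        (∑ i, (u' i * v t i + u t i * v' i)) I t :=
      HasDerivWithinAt.fun_sum fun i _ =>
        (hasDerivWithinAt_pi.1 hu i).mul (hasDerivWithinAt_pi.1 hv i)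
    simpa [dotProduct, Finset.sum_add_distrib] using h
  -- derivative of Mα in product-rule form
  have hMα : ∀ t ∈ I, HasDerivWithinAt (fun s => (M s).mulVec (α s))
      ((M' t).mulVec (α t) + (M t).mulVec (α' t)) I t := by
    intro t ht
    rw [hasDerivWithinAt_pi]
    intro i
    have h : HasDerivWithinAt (fun s => ∑ j, M s i j * α s j)
        (∑ j, (M' t i j * α t j + M t i j * α' t j)) I t :=
      HasDerivWithinAt.fun_sum fun j _ =>
        (hMderiv t ht i j).mul (hasDerivWithinAt_pi.1 (hα' t ht) j)
    simpa [Matrix.mulVec, dotProduct, Finset.sum_add_distrib] using h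
  -- uniqueness of derivatives gives an expression for M α'
  have huniq : ∀ t ∈ I, (M t).mulVec (α' t)
      = -(S t + B t).mulVec (α t) - (M' t).mulVec (α t) := by
    intro t ht
    have hud : UniqueDiffWithinAt ℝ I t := (uniqueDiffOn_Icc hT) t ht
    have h1 := (hMα t ht).derivWithin hud
    have h2 := (hODE t ht).derivWithin hud
    have h3 : (M' t).mulVec (α t) + (M t).mulVec (α' t)
        = -(S t + B t).mulVec (α t) := h1.symm.trans h2
    exact eq_sub_of_add_eq' h3
  -- symmetry of M in the bilinear form
  have hsymm : ∀ t ∈ I, ∀ a b : Fin J → ℝ,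
      (M t).mulVec a ⬝ᵥ b = (M t).mulVec b ⬝ᵥ a := by
    intro t ht a b
    have hH : (M t)ᵀ = M t := by
      have := (hMpd t ht).isHermitian.eq
      rwa [Matrix.conjTranspose_eq_transpose_of_trivial] at this
    calc (M t).mulVec a ⬝ᵥ b = b ⬝ᵥ (M t).mulVec a := dotProduct_comm _ _
      _ = (M t).vecMul b ⬝ᵥ a := Matrix.dotProduct_mulVec _ _ _
      _ = (M t)ᵀ.mulVec b ⬝ᵥ a := by rw [Matrix.mulVec_transpose]
      _ = (M t).mulVec b ⬝ᵥ a := by rw [hH]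
  -- derivative of f
  set F : ℝ → ℝ := fun t => (-(S t + B t).mulVec (α t)) ⬝ᵥ α t
      + ((M t).mulVec (α t)) ⬝ᵥ α' t with hFdef
  have hfderiv : ∀ t ∈ I, HasDerivWithinAt f (F t) I t := by
    intro t ht
    exact hdot t ht (fun s => (M s).mulVec (α s)) α _ _ (hODE t ht) (hα' t ht)
  -- derivative of the integral term
  have hg : ∀ t ∈ I, HasDerivWithinAt (fun u => ∫ s in (0:ℝ)..u, φ s) (φ t) I t := by
    intro t ht
    haveI : Fact (t ∈ Set.Icc (0:ℝ) T) := ⟨ht⟩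
    have hInt : IntervalIntegrable φ MeasureTheory.volume 0 t := by
      apply ContinuousOn.intervalIntegrable
      apply hφcont.mono
      rw [Set.uIcc_of_le ht.1]
      exact Set.Icc_subset_Icc le_rfl ht.2
    exact intervalIntegral.integral_hasDerivWithinAt_right hInt
      (hφcont.stronglyMeasurableAtFilter_nhdsWithin measurableSet_Icc t)
      (hφcont t ht)
  -- the combined function h and its derivative
  set h : ℝ → ℝ := fun u => f u + ∫ s in (0:ℝ)..u, φ s with hhdef
  set h' : ℝ → ℝ := fun u => F u + φ u with hh'def
  have hhderiv : ∀ t ∈ I, HasDerivWithinAt h (h' t) I t :=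
    fun t ht => (hfderiv t ht).add (hg t ht)
  have hhcont : ContinuousOn h I := fun t ht => (hhderiv t ht).continuousWithinAt
  -- the pointwise differential inequality
  have hbound : ∀ x ∈ Set.Ico (0:ℝ) T, h' x ≤ (c₁ + 2 * c₂) * h x + 0 := by
    intro x hx
    have hxI : x ∈ I := ⟨hx.1, le_of_lt hx.2⟩
    have hMα' : ((M x).mulVec (α x)) ⬝ᵥ α' x
        = (-(S x + B x).mulVec (α x) - (M' x).mulVec (α x)) ⬝ᵥ α x := by
      rw [hsymm x hxI (α x) (α' x), huniq x hxI]
    have hexp : -(S x + B x).mulVec (α x) ⬝ᵥ α x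
        = -((S x).mulVec (α x) ⬝ᵥ α x) - ((B x).mulVec (α x) ⬝ᵥ α x) := by
      simp [Matrix.add_mulVec, neg_dotProduct, add_dotProduct]
      ring
    have hB' := hBbound x hxI (α x)
    have hM'' := hM'bound x hxI (α x)
    have habs1 : -((B x).mulVec (α x) ⬝ᵥ α x) ≤ |(B x).mulVec (α x) ⬝ᵥ α x| :=
      neg_le_abs _
    have habs2 : -((M' x).mulVec (α x) ⬝ᵥ α x) ≤ |(M' x).mulVec (α x) ⬝ᵥ α x| :=
      neg_le_abs _
    have hint_nonneg : 0 ≤ ∫ s in (0:ℝ)..x, φ s := by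
      apply intervalIntegral.integral_nonneg hx.1
      intro u hu
      exact hφnonneg u ⟨hu.1, le_trans hu.2 (le_of_lt hx.2)⟩
    have hh'eq : h' x = -(S x + B x).mulVec (α x) ⬝ᵥ α x
        + (-(S x + B x).mulVec (α x) - (M' x).mulVec (α x)) ⬝ᵥ α x + φ x := by
      simp only [hh'def, hFdef, hMα']
    rw [hh'eq]
    have hsub : (-(S x + B x).mulVec (α x) - (M' x).mulVec (α x)) ⬝ᵥ α x
        = -(S x + B x).mulVec (α x) ⬝ᵥ α x - (M' x).mulVec (α x) ⬝ᵥ α x := by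
      simp [sub_dotProduct]
    rw [hsub, hexp]
    simp only [hφdef, hfdef, hhdef]
    nlinarith [hint_nonneg, (hMpd x hxI).2, hB', hM'', habs1, habs2,
      mul_nonneg hc₂ hint_nonneg, mul_nonneg hc₁ hint_nonneg]
  -- slope condition for Grönwall
  have hslope : ∀ x ∈ Set.Ico (0:ℝ) T, ∀ r, h' x < r →
      ∃ᶠ z in nhdsWithin x (Set.Ioi x), (z - x)⁻¹ * (h z - h x) < r := by
    intro x hx r hr
    have hxI : x ∈ I := ⟨hx.1, le_of_lt hx.2⟩
    have hmem : I ∈ nhdsWithin x (Set.Ici x) := by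
      refine mem_nhdsWithin.2 ⟨Set.Iio T, isOpen_Iio, hx.2, ?_⟩
      rintro y ⟨hy1, hy2⟩
      exact ⟨le_trans hx.1 hy2, le_of_lt hy1⟩
    have hd : HasDerivWithinAt h (h' x) (Set.Ici x) x :=
      (hhderiv x hxI).mono_of_mem_nhdsWithin hmem
    have := hd.liminf_right_slope_le hr
    simpa [slope_def_field, div_eq_inv_mul] using this
  have h0 : h 0 ≤ f 0 := by
    simp [hhdef, intervalIntegral.integral_same]
  have key := le_gronwallBound_of_liminf_deriv_right_le (f := h) (f' := h')
    (δ := f 0) (K := c₁ + 2 * c₂) (ε := 0) (a := 0) (b := T)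
    hhcont hslope h0 hbound
  intro t ht
  have := key t ht
  rw [sub_zero, gronwallBound_ε0] at this
  calc (M t).mulVec (α t) ⬝ᵥ α t + (∫ s in (0:ℝ)..t, (S s).mulVec (α s) ⬝ᵥ α s)
      = h t := rfl
    _ ≤ f 0 * Real.exp ((c₁ + 2 * c₂) * t) := this
    _ = Real.exp ((c₁ + 2 * c₂) * t) * ((M 0).mulVec (α 0) ⬝ᵥ α 0) := mul_comm _ _
end

section
/- Let J ∈ ℕ, T > 0, and let M, S, B : [0,T] → ℝ^{J×J} be continuously differentiable with each M(t) symmetric positive definite and each S(t) symmetric positive semidefinite. Suppose there are constants c₁, c₃, c₄ ≥ 0 such that for all t ∈ [0,T] and all x, y ∈ ℝ^J: |M'(t) x·y| ≤ c₁ (M(t) x·x)^{1/2} (M(t) y·y)^{1/2}, |S'(t) x·x| ≤ c₃ (S(t) x·x), |B(t) x·y| ≤ c₄ (M(t) x·x)^{1/2} (S(t) y·y)^{1/2}, and |B'(t) x·y| ≤ c₄ (M(t) x·x)^{1/2} (S(t) y·y)^{1/2}, where the nonsymmetric term enters the evolution equation through the bilinear map (x,y) ↦ B(t) x·y in its first slot,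 i.e. α satisfies: for all t ∈ [0,T] and all φ ∈ ℝ^J, (d/dt)(M(t) α(t))·φ + S(t) α(t)·φ + B(t) α(t)·φ = 0, with α : [0,T] → ℝ^J continuously differentiable. Then there is a constant C depending only on c₁, c₃, c₄ and T such that ∫_0^T M(t) α'(t)·α'(t) dt + sup_{t∈[0,T]} S(t) α(t)·α(t) ≤ C (M(0) α(0)·α(0) + S(0) α(0)·α(0)). -/
open Matrix Set

section ALEaux

private lemma quad_deriv {J : ℕ} {s : Set ℝ} {t : ℝ}
    {A : ℝ → Matrix (Fin J) (Fin J) ℝ} {A' : Matrix (Fin J) (Fin J) ℝ}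
    {x y : ℝ → Fin J → ℝ} {x' y' : Fin J → ℝ}
    (hA : ∀ i j, HasDerivWithinAt (fun u => A u i j) (A' i j) s t)
    (hx : ∀ i, HasDerivWithinAt (fun u => x u i) (x' i) s t)
    (hy : ∀ i, HasDerivWithinAt (fun u => y u i) (y' i) s t) :
    HasDerivWithinAt (fun u => (A u).mulVec (x u) ⬝ᵥ y u)
      (A' *ᵥ (x t) ⬝ᵥ y t + (A t) *ᵥ x' ⬝ᵥ y t + (A t) *ᵥ (x t) ⬝ᵥ y') s t := by
  simp only [Matrix.mulVec, dotProduct]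
  have h : HasDerivWithinAt (fun u => ∑ i, (∑ j, A u i j * x u j) * y u i)
      (∑ i, (((∑ j, (A' i j * x t j + A t i j * x' j)) * y t i
        + (∑ j, A t i j * x t j) * y' i))) s t :=
    HasDerivWithinAt.fun_sum fun i _ =>
      (HasDerivWithinAt.fun_sum fun j _ => (hA i j).mul (hx j)).mul (hy i)
  convert h using 1
  rw [Finset.sum_add_distrib]
  congr 1
  · rw [← Finset.sum_add_distrib]
    refine Finset.sum_congr rfl fun i _ => ?_
    rw [Finset.sum_add_distrib, add_mul]

private lemma quad_cont {J : ℕ} {s : Set ℝ}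
    {A : ℝ → Matrix (Fin J) (Fin J) ℝ} {x y : ℝ → Fin J → ℝ}
    (hA : ∀ i j, ContinuousOn (fun u => A u i j) s)
    (hx : ∀ i, ContinuousOn (fun u => x u i) s)
    (hy : ∀ i, ContinuousOn (fun u => y u i) s) :
    ContinuousOn (fun u => (A u).mulVec (x u) ⬝ᵥ y u) s := by
  simp only [Matrix.mulVec, dotProduct]
  exact continuousOn_finset_sum _ fun i _ =>
    (continuousOn_finset_sum _ fun j _ => (hA i j).mul (hx j)).mul (hy i)

private lemma symm_swap {J : ℕ} {A : Matrix (Fin J) (Fin J) ℝ} (h : A.IsHermitian)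
    (x y : Fin J → ℝ) : A *ᵥ x ⬝ᵥ y = A *ᵥ y ⬝ᵥ x := by
  simp only [Matrix.mulVec, dotProduct, Finset.sum_mul]
  rw [Finset.sum_comm]
  refine Finset.sum_congr rfl fun i _ => Finset.sum_congr rfl fun j _ => ?_
  have := congrFun (congrFun h.eq j) i
  simp only [Matrix.conjTranspose_apply, RCLike.star_def, Matrix.transpose_apply,
    starRingEnd_apply, star_trivial] at this
  rw [← this]; ring

private lemma psd_nonneg {J : ℕ} {A : Matrix (Fin J) (Fin J) ℝ} (h : A.PosSemidef)
    (x : Fin J → ℝ) : 0 ≤ A *ᵥ x ⬝ᵥ x := by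
  have := h.dotProduct_mulVec_nonneg x
  simpa [dotProduct_comm] using this

private lemma sqrt_quarter (c a b : ℝ) (ha : 0 ≤ a) (hb : 0 ≤ b) :
    c * Real.sqrt a * Real.sqrt b ≤ c ^ 2 * a + b / 4 := by
  nlinarith [sq_nonneg (Real.sqrt b / 2 - c * Real.sqrt a), Real.sq_sqrt ha, Real.sq_sqrt hb,
    Real.sqrt_nonneg a, Real.sqrt_nonneg b]

private lemma sqrt_half (c a b : ℝ) (hc : 0 ≤ c) (ha : 0 ≤ a) (hb : 0 ≤ b) :
    c * Real.sqrt a * Real.sqrt b ≤ c / 2 * (a + b) := by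
  nlinarith [sq_nonneg (Real.sqrt a - Real.sqrt b), Real.sq_sqrt ha, Real.sq_sqrt hb,
    Real.sqrt_nonneg a, Real.sqrt_nonneg b]

private lemma gronwall_light {T K : ℝ} (hT : 0 < T) (hK : 0 ≤ K)
    {f f' : ℝ → ℝ}
    (hf : ∀ t ∈ Icc (0:ℝ) T, HasDerivWithinAt f (f' t) (Icc (0:ℝ) T) t)
    (hb : ∀ t ∈ Icc (0:ℝ) T, f' t ≤ K * f t) (h0 : 0 ≤ f 0) :
    ∀ t ∈ Icc (0:ℝ) T, f t ≤ Real.exp (K * T) * f 0 := by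
  set g : ℝ → ℝ := fun t => f t * Real.exp (-K * t) with hg
  have hcf : ContinuousOn f (Icc (0:ℝ) T) := fun u hu => (hf u hu).continuousWithinAt
  have hgD : ∀ u ∈ Ioo (0:ℝ) T, HasDerivAt g ((f' u - K * f u) * Real.exp (-K * u)) u := by
    intro u hu
    have hfu : HasDerivAt f (f' u) u :=
      (hf u (Ioo_subset_Icc_self hu)).hasDerivAt (Icc_mem_nhds hu.1 hu.2)
    have he : HasDerivAt (fun t => Real.exp (-K * t)) (-K * Real.exp (-K * u)) u := by
      have := (Real.hasDerivAt_exp (-K * u)).comp u ((hasDerivAt_id u).const_mul (-K))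
      simp only [Function.comp_def] at this
      exact this.congr_deriv (by ring)
    have := hfu.mul he
    exact this.congr_deriv (by ring)
  have hanti : AntitoneOn g (Icc (0:ℝ) T) := by
    apply antitoneOn_of_deriv_nonpos (convex_Icc _ _)
    · exact hcf.mul (Real.continuous_exp.comp (continuous_const.mul continuous_id)).continuousOn
    · rw [interior_Icc]
      exact fun u hu => (hgD u hu).differentiableAt.differentiableWithinAt
    · rw [interior_Icc]
      intro u hu
      rw [(hgD u hu).deriv]
      have h1 : f' u - K * f u ≤ 0 := by
        have := hb u (Ioo_subset_Icc_self hu); linarith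
      exact mul_nonpos_of_nonpos_of_nonneg h1 (Real.exp_nonneg _)
  intro t ht
  have hgt : g t ≤ g 0 := hanti (left_mem_Icc.2 hT.le) ht ht.1
  simp only [hg, mul_zero, neg_mul, Real.exp_zero, mul_one, neg_zero] at hgt
  have h2 : f t ≤ f 0 * Real.exp (K * t) := by
    calc f t = f t * Real.exp (-(K*t)) * Real.exp (K*t) := by
          rw [mul_assoc, ← Real.exp_add]; simp
      _ ≤ f 0 * Real.exp (K*t) :=
          mul_le_mul_of_nonneg_right hgt (Real.exp_nonneg _)
  calc f t ≤ f 0 * Real.exp (K * t) := h2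
    _ ≤ Real.exp (K * T) * f 0 := by
        rw [mul_comm]
        exact mul_le_mul_of_nonneg_right (Real.exp_le_exp.2 (by nlinarith [ht.2])) h0

private lemma ftcICC {T t : ℝ} (ht : t ∈ Icc (0:ℝ) T)
    {f f' : ℝ → ℝ}
    (hf : ∀ u ∈ Icc (0:ℝ) T, HasDerivWithinAt f (f' u) (Icc (0:ℝ) T) u)
    (hf' : ContinuousOn f' (Icc (0:ℝ) T)) :
    ∫ s in (0:ℝ)..t, f' s = f t - f 0 := by
  have hsub : Icc (0:ℝ) t ⊆ Icc (0:ℝ) T := Icc_subset_Icc le_rfl ht.2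
  apply intervalIntegral.integral_eq_sub_of_hasDeriv_right_of_le ht.1
  · exact fun u hu => ((hf u (hsub hu)).continuousWithinAt).mono hsub
  · intro u hu
    have h2 : u ∈ Ioo (0:ℝ) T := ⟨hu.1, lt_of_lt_of_le hu.2 ht.2⟩
    exact ((hf u (Ioo_subset_Icc_self h2)).hasDerivAt
      (Icc_mem_nhds h2.1 h2.2)).hasDerivWithinAt
  · exact (hf'.mono hsub).intervalIntegrable_of_Icc ht.1

end ALEaux

/-- Material-derivative (H¹) stability bound for the semidiscrete ALE-ESFEM
scheme in matrix–vector form: there is a constant `C` depending only on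
`c₁, c₃, c₄` and `T` such that for any C¹ families `M, S, B` of matrices
(`M(t)` symmetric positive definite, `S(t)` symmetric positive semidefinite)
satisfying the transport bounds on `M', S', B, B'`, and any C¹ solution `α` of
`(d/dt)(M α)·φ + S α·φ + B α·φ = 0` for all `φ`, one has
`∫₀ᵀ M α'·α' + sup_{t∈[0,T]} S(t)α(t)·α(t) ≤ C (M(0)α(0)·α(0) + S(0)α(0)·α(0))`. -/
theorem semidiscrete_H1_stability
    (c₁ c₃ c₄ T : ℝ) (hc₁ : 0 ≤ c₁) (hc₃ : 0 ≤ c₃) (hc₄ : 0 ≤ c₄) (hT : 0 < T) :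
    ∃ C : ℝ, 0 ≤ C ∧
      ∀ (J : ℕ) (M M' S S' B B' : ℝ → Matrix (Fin J) (Fin J) ℝ),
        (∀ t ∈ Set.Icc (0 : ℝ) T, ∀ i j : Fin J,
          HasDerivWithinAt (fun s => M s i j) (M' t i j) (Set.Icc (0 : ℝ) T) t) →
        (∀ i j : Fin J, ContinuousOn (fun s => M' s i j) (Set.Icc (0 : ℝ) T)) →
        (∀ t ∈ Set.Icc (0 : ℝ) T, ∀ i j : Fin J,
          HasDerivWithinAt (fun s => S s i j) (S' t i j) (Set.Icc (0 : ℝ) T) t) →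
        (∀ i j : Fin J, ContinuousOn (fun s => S' s i j) (Set.Icc (0 : ℝ) T)) →
        (∀ t ∈ Set.Icc (0 : ℝ) T, ∀ i j : Fin J,
          HasDerivWithinAt (fun s => B s i j) (B' t i j) (Set.Icc (0 : ℝ) T) t) →
        (∀ i j : Fin J, ContinuousOn (fun s => B' s i j) (Set.Icc (0 : ℝ) T)) →
        (∀ t ∈ Set.Icc (0 : ℝ) T, (M t).PosDef) →
        (∀ t ∈ Set.Icc (0 : ℝ) T, (S t).PosSemidef) →
        (∀ t ∈ Set.Icc (0 : ℝ) T, ∀ x y : Fin J → ℝ,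
          |(M' t).mulVec x ⬝ᵥ y|
            ≤ c₁ * Real.sqrt ((M t).mulVec x ⬝ᵥ x) * Real.sqrt ((M t).mulVec y ⬝ᵥ y)) →
        (∀ t ∈ Set.Icc (0 : ℝ) T, ∀ x : Fin J → ℝ,
          |(S' t).mulVec x ⬝ᵥ x| ≤ c₃ * ((S t).mulVec x ⬝ᵥ x)) →
        (∀ t ∈ Set.Icc (0 : ℝ) T, ∀ x y : Fin J → ℝ,
          |(B t).mulVec x ⬝ᵥ y|
            ≤ c₄ * Real.sqrt ((M t).mulVec x ⬝ᵥ x) * Real.sqrt ((S t).mulVec y ⬝ᵥ y)) →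
        (∀ t ∈ Set.Icc (0 : ℝ) T, ∀ x y : Fin J → ℝ,
          |(B' t).mulVec x ⬝ᵥ y|
            ≤ c₄ * Real.sqrt ((M t).mulVec x ⬝ᵥ x) * Real.sqrt ((S t).mulVec y ⬝ᵥ y)) →
        ∀ (α α' : ℝ → Fin J → ℝ),
          (∀ t ∈ Set.Icc (0 : ℝ) T,
            HasDerivWithinAt α (α' t) (Set.Icc (0 : ℝ) T) t) →
          ContinuousOn α' (Set.Icc (0 : ℝ) T) →
          (∀ t ∈ Set.Icc (0 : ℝ) T, ∀ φ : Fin J → ℝ,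
            ((M' t).mulVec (α t) + (M t).mulVec (α' t)) ⬝ᵥ φ
              + (S t).mulVec (α t) ⬝ᵥ φ + (B t).mulVec (α t) ⬝ᵥ φ = 0) →
          ∀ t ∈ Set.Icc (0 : ℝ) T,
            (∫ s in (0 : ℝ)..T, (M s).mulVec (α' s) ⬝ᵥ α' s)
                + (S t).mulVec (α t) ⬝ᵥ α t
              ≤ C * ((M 0).mulVec (α 0) ⬝ᵥ α 0 + (S 0).mulVec (α 0) ⬝ᵥ α 0) := by
  have hK : (0:ℝ) ≤ c₁ + 2 * c₄ ^ 2 := by positivity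
  obtain ⟨C₀, hC₀def⟩ : ∃ x : ℝ, x = Real.exp ((c₁ + 2 * c₄ ^ 2) * T) := ⟨_, rfl⟩
  have hC₀ : 0 < C₀ := hC₀def ▸ Real.exp_pos _
  obtain ⟨Cb, hCbdef⟩ : ∃ x : ℝ,
      x = 2 * (c₁ ^ 2 + c₄ / 2) * (T * C₀) + 2 * (c₃ / 2 + c₄ / 2 + c₄ ^ 2)
        * (1 + (c₁ + 2 * c₄ ^ 2) * (T * C₀)) + 1 + c₄ + 2 * c₄ ^ 2 * C₀ := ⟨_, rfl⟩
  have hCb : 0 ≤ Cb := by rw [hCbdef]; positivity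
  refine ⟨3 * Cb, by positivity, ?_⟩
  intro J M M' S S' B B' hM hM'c hS hS'c hB hB'c hMpd hSpsd hbM hbS hbB hbB' α α' hα hα'c heq
  -- abbreviations (opaque, with defining equations)
  obtain ⟨m, hm_eq⟩ : ∃ f : ℝ → ℝ, f = fun u => (M u) *ᵥ (α u) ⬝ᵥ (α u) := ⟨_, rfl⟩
  obtain ⟨e, he_eq⟩ : ∃ f : ℝ → ℝ, f = fun u => (S u) *ᵥ (α u) ⬝ᵥ (α u) := ⟨_, rfl⟩
  obtain ⟨g, hg_eq⟩ : ∃ f : ℝ → ℝ, f = fun u => (M u) *ᵥ (α' u) ⬝ᵥ (α' u) := ⟨_, rfl⟩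
  obtain ⟨p, hp_eq⟩ : ∃ f : ℝ → ℝ, f = fun u => (B u) *ᵥ (α u) ⬝ᵥ (α u) := ⟨_, rfl⟩
  obtain ⟨md, hmd_eq⟩ : ∃ f : ℝ → ℝ, f = fun u =>
      (M' u) *ᵥ (α u) ⬝ᵥ (α u) + (M u) *ᵥ (α' u) ⬝ᵥ (α u) + (M u) *ᵥ (α u) ⬝ᵥ (α' u) := ⟨_, rfl⟩
  obtain ⟨ed, hed_eq⟩ : ∃ f : ℝ → ℝ, f = fun u =>
      (S' u) *ᵥ (α u) ⬝ᵥ (α u) + (S u) *ᵥ (α' u) ⬝ᵥ (α u) + (S u) *ᵥ (α u) ⬝ᵥ (α' u) := ⟨_, rfl⟩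
  obtain ⟨pd, hpd_eq⟩ : ∃ f : ℝ → ℝ, f = fun u =>
      (B' u) *ᵥ (α u) ⬝ᵥ (α u) + (B u) *ᵥ (α' u) ⬝ᵥ (α u) + (B u) *ᵥ (α u) ⬝ᵥ (α' u) := ⟨_, rfl⟩
  have hmu : ∀ u, m u = (M u) *ᵥ (α u) ⬝ᵥ (α u) := fun u => by rw [hm_eq]
  have heu : ∀ u, e u = (S u) *ᵥ (α u) ⬝ᵥ (α u) := fun u => by rw [he_eq]
  have hgu : ∀ u, g u = (M u) *ᵥ (α' u) ⬝ᵥ (α' u) := fun u => by rw [hg_eq]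
  have hpu : ∀ u, p u = (B u) *ᵥ (α u) ⬝ᵥ (α u) := fun u => by rw [hp_eq]
  have hmdu : ∀ u, md u = (M' u) *ᵥ (α u) ⬝ᵥ (α u) + (M u) *ᵥ (α' u) ⬝ᵥ (α u)
      + (M u) *ᵥ (α u) ⬝ᵥ (α' u) := fun u => by rw [hmd_eq]
  have hedu : ∀ u, ed u = (S' u) *ᵥ (α u) ⬝ᵥ (α u) + (S u) *ᵥ (α' u) ⬝ᵥ (α u)
      + (S u) *ᵥ (α u) ⬝ᵥ (α' u) := fun u => by rw [hed_eq]
  have hpdu : ∀ u, pd u = (B' u) *ᵥ (α u) ⬝ᵥ (α u) + (B u) *ᵥ (α' u) ⬝ᵥ (α u)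
      + (B u) *ᵥ (α u) ⬝ᵥ (α' u) := fun u => by rw [hpd_eq]
  have hIcc : (0:ℝ) ∈ Icc (0:ℝ) T := left_mem_Icc.2 hT.le
  -- componentwise facts
  have hαd : ∀ u ∈ Icc (0:ℝ) T, ∀ i,
      HasDerivWithinAt (fun s => α s i) (α' u i) (Icc (0:ℝ) T) u :=
    fun u hu i => hasDerivWithinAt_pi.1 (hα u hu) i
  have hαcont : ∀ i, ContinuousOn (fun s => α s i) (Icc (0:ℝ) T) := by
    intro i
    have : ContinuousOn α (Icc (0:ℝ) T) := fun u hu => (hα u hu).continuousWithinAt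
    exact (continuous_apply i).comp_continuousOn this
  have hα'cont : ∀ i, ContinuousOn (fun s => α' s i) (Icc (0:ℝ) T) :=
    fun i => (continuous_apply i).comp_continuousOn hα'c
  have hMc : ∀ i j, ContinuousOn (fun s => M s i j) (Icc (0:ℝ) T) :=
    fun i j u hu => (hM u hu i j).continuousWithinAt
  have hSc : ∀ i j, ContinuousOn (fun s => S s i j) (Icc (0:ℝ) T) :=
    fun i j u hu => (hS u hu i j).continuousWithinAt
  have hBc : ∀ i j, ContinuousOn (fun s => B s i j) (Icc (0:ℝ) T) :=
    fun i j u hu => (hB u hu i j).continuousWithinAt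
  -- derivatives
  have hmD : ∀ u ∈ Icc (0:ℝ) T, HasDerivWithinAt m (md u) (Icc (0:ℝ) T) u := by
    intro u hu; rw [hm_eq, hmdu u]; exact quad_deriv (hM u hu) (hαd u hu) (hαd u hu)
  have heD : ∀ u ∈ Icc (0:ℝ) T, HasDerivWithinAt e (ed u) (Icc (0:ℝ) T) u := by
    intro u hu; rw [he_eq, hedu u]; exact quad_deriv (hS u hu) (hαd u hu) (hαd u hu)
  have hpD : ∀ u ∈ Icc (0:ℝ) T, HasDerivWithinAt p (pd u) (Icc (0:ℝ) T) u := by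
    intro u hu; rw [hp_eq, hpdu u]; exact quad_deriv (hB u hu) (hαd u hu) (hαd u hu)
  -- continuity
  have hmCont : ContinuousOn m (Icc (0:ℝ) T) := hm_eq ▸ quad_cont hMc hαcont hαcont
  have heCont : ContinuousOn e (Icc (0:ℝ) T) := he_eq ▸ quad_cont hSc hαcont hαcont
  have hgCont : ContinuousOn g (Icc (0:ℝ) T) := hg_eq ▸ quad_cont hMc hα'cont hα'cont
  have hmdCont : ContinuousOn md (Icc (0:ℝ) T) := hmd_eq ▸
    ((quad_cont hM'c hαcont hαcont).add (quad_cont hMc hα'cont hαcont)).add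
      (quad_cont hMc hαcont hα'cont)
  have hedCont : ContinuousOn ed (Icc (0:ℝ) T) := hed_eq ▸
    ((quad_cont hS'c hαcont hαcont).add (quad_cont hSc hα'cont hαcont)).add
      (quad_cont hSc hαcont hα'cont)
  have hpdCont : ContinuousOn pd (Icc (0:ℝ) T) := hpd_eq ▸
    ((quad_cont hB'c hαcont hαcont).add (quad_cont hBc hα'cont hαcont)).add
      (quad_cont hBc hαcont hα'cont)
  -- nonnegativity
  have hm0 : ∀ u ∈ Icc (0:ℝ) T, 0 ≤ m u := by
    intro u hu; rw [hmu u]; exact psd_nonneg (hMpd u hu).posSemidef _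
  have he0 : ∀ u ∈ Icc (0:ℝ) T, 0 ≤ e u := by
    intro u hu; rw [heu u]; exact psd_nonneg (hSpsd u hu) _
  have hg0 : ∀ u ∈ Icc (0:ℝ) T, 0 ≤ g u := by
    intro u hu; rw [hgu u]; exact psd_nonneg (hMpd u hu).posSemidef _
  -- pointwise inequality for the L² (Gronwall) step
  have hmd_le : ∀ u ∈ Icc (0:ℝ) T, md u ≤ (c₁ + 2 * c₄ ^ 2) * m u - e u := by
    intro u hu
    have heqα := heq u hu (α u)
    rw [add_dotProduct] at heqα
    rw [← heu u, ← hpu u] at heqα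
    have hswap : (M u) *ᵥ (α u) ⬝ᵥ (α' u) = (M u) *ᵥ (α' u) ⬝ᵥ (α u) :=
      symm_swap (hMpd u hu).1 _ _
    have hmd2 : md u = -((M' u) *ᵥ (α u) ⬝ᵥ (α u)) - 2 * e u - 2 * p u := by
      rw [hmdu u, hswap]; linarith
    have hX := hbM u hu (α u) (α u)
    rw [← hmu u] at hX
    have hss : Real.sqrt (m u) * Real.sqrt (m u) = m u := Real.mul_self_sqrt (hm0 u hu)
    have hX' : |(M' u) *ᵥ (α u) ⬝ᵥ (α u)| ≤ c₁ * m u := by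
      calc |(M' u) *ᵥ (α u) ⬝ᵥ (α u)|
          ≤ c₁ * Real.sqrt (m u) * Real.sqrt (m u) := hX
        _ = c₁ * m u := by rw [mul_assoc, hss]
    have hP := hbB u hu (α u) (α u)
    rw [← hmu u, ← heu u, ← hpu u] at hP
    have hq := sqrt_quarter c₄ (m u) (e u) (hm0 u hu) (he0 u hu)
    have h1 := abs_le.1 hX'
    have h2 := abs_le.1 hP
    nlinarith [he0 u hu]
  have hmd_le' : ∀ u ∈ Icc (0:ℝ) T, md u ≤ (c₁ + 2 * c₄ ^ 2) * m u :=
    fun u hu => le_trans (hmd_le u hu) (by linarith [he0 u hu])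
  -- Gronwall: m u ≤ C₀ * m 0
  have hmB : ∀ u ∈ Icc (0:ℝ) T, m u ≤ C₀ * m 0 := by
    rw [hC₀def]
    exact gronwall_light hT hK hmD hmd_le' (hm0 0 hIcc)
  -- key pointwise inequality for the H¹ step
  have hkey : ∀ u ∈ Icc (0:ℝ) T,
      g u ≤ 2 * (c₁ ^ 2 + c₄ / 2) * m u + 2 * (c₃ / 2 + c₄ / 2 + c₄ ^ 2) * e u
        - ed u - 2 * pd u := by
    intro u hu
    have heqα' := heq u hu (α' u)
    rw [add_dotProduct] at heqα'
    rw [← hgu u] at heqα'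
    have hswapS : (S u) *ᵥ (α u) ⬝ᵥ (α' u) = (S u) *ᵥ (α' u) ⬝ᵥ (α u) :=
      symm_swap (hSpsd u hu).1 _ _
    -- bounds, folded into m, e, g
    have hX' := hbM u hu (α u) (α' u)
    rw [← hmu u, ← hgu u] at hX'
    have hX'' := abs_le.1 hX'
    have hq1 := sqrt_quarter c₁ (m u) (g u) (hm0 u hu) (hg0 u hu)
    have hB'b := hbB' u hu (α u) (α u)
    rw [← hmu u, ← heu u] at hB'b
    have hB'b' := abs_le.1 hB'b
    have hh := sqrt_half c₄ (m u) (e u) hc₄ (hm0 u hu) (he0 u hu)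
    have hBb := hbB u hu (α' u) (α u)
    rw [← hgu u, ← heu u] at hBb
    have hBb' := abs_le.1 hBb
    have hq2 := sqrt_quarter c₄ (e u) (g u) (he0 u hu) (hg0 u hu)
    have hcomm : c₄ * Real.sqrt (g u) * Real.sqrt (e u)
        = c₄ * Real.sqrt (e u) * Real.sqrt (g u) := by ring
    rw [hcomm] at hBb'
    have hS'b := hbS u hu (α u)
    rw [← heu u] at hS'b
    have hS'b' := abs_le.1 hS'b
    rw [hedu u, hpdu u]
    linarith [heqα', hswapS, hX''.1, hX''.2, hq1, hB'b'.1, hB'b'.2, hh, hBb'.1, hBb'.2, hq2,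
      hS'b'.1, hS'b'.2]
  -- integrals
  intro t ht
  have hsubt : Icc (0:ℝ) t ⊆ Icc (0:ℝ) T := Icc_subset_Icc le_rfl ht.2
  have intOf : ∀ {f : ℝ → ℝ} {r : ℝ}, r ∈ Icc (0:ℝ) T → ContinuousOn f (Icc (0:ℝ) T) →
      IntervalIntegrable f MeasureTheory.volume 0 r := fun hr hf =>
    (hf.mono (Icc_subset_Icc le_rfl hr.2)).intervalIntegrable_of_Icc hr.1
  -- integral bound on [0, r] for r ∈ Icc 0 T
  have main : ∀ r ∈ Icc (0:ℝ) T,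
      (∫ s in (0:ℝ)..r, g s) + e r / 2 ≤ Cb * (m 0 + e 0) := by
    intro r hr
    have hsub : Icc (0:ℝ) r ⊆ Icc (0:ℝ) T := Icc_subset_Icc le_rfl hr.2
    -- ∫ m ≤ T * C₀ * m 0
    have hIm : (∫ s in (0:ℝ)..r, m s) ≤ T * (C₀ * m 0) := by
      have h1 : (∫ s in (0:ℝ)..r, m s) ≤ ∫ _s in (0:ℝ)..r, C₀ * m 0 :=
        intervalIntegral.integral_mono_on hr.1 (intOf hr hmCont)
          intervalIntegrable_const (fun u hu => hmB u (hsub hu))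
      have h2 : (∫ _s in (0:ℝ)..r, C₀ * m 0) = r * (C₀ * m 0) := by
        simp [intervalIntegral.integral_const]; ring
      have h3 : r * (C₀ * m 0) ≤ T * (C₀ * m 0) :=
        mul_le_mul_of_nonneg_right hr.2 (mul_nonneg hC₀.le (hm0 0 hIcc))
      linarith
    -- ∫ e ≤ (1 + K*T*C₀) * m 0
    have hftcm : (∫ s in (0:ℝ)..r, md s) = m r - m 0 := ftcICC hr hmD hmdCont
    have hIe : (∫ s in (0:ℝ)..r, e s) ≤ (1 + (c₁ + 2 * c₄ ^ 2) * (T * C₀)) * m 0 := by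
      have h1 : (∫ s in (0:ℝ)..r, e s)
          ≤ ∫ s in (0:ℝ)..r, ((c₁ + 2 * c₄ ^ 2) * m s - md s) := by
        apply intervalIntegral.integral_mono_on hr.1 (intOf hr heCont)
        · exact ((intOf hr hmCont).const_mul _).sub (intOf hr hmdCont)
        · intro u hu
          have := hmd_le u (hsub hu); linarith
      have h2 : (∫ s in (0:ℝ)..r, ((c₁ + 2 * c₄ ^ 2) * m s - md s))
          = (c₁ + 2 * c₄ ^ 2) * (∫ s in (0:ℝ)..r, m s) - (m r - m 0) := by
        rw [intervalIntegral.integral_sub ((intOf hr hmCont).const_mul _) (intOf hr hmdCont),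
          intervalIntegral.integral_const_mul, hftcm]
      have h3 : (c₁ + 2 * c₄ ^ 2) * (∫ s in (0:ℝ)..r, m s)
          ≤ (c₁ + 2 * c₄ ^ 2) * (T * (C₀ * m 0)) :=
        mul_le_mul_of_nonneg_left hIm hK
      have h4 := hm0 r hr
      linarith
    -- FTC for e and p
    have hftce : (∫ s in (0:ℝ)..r, ed s) = e r - e 0 := ftcICC hr heD hedCont
    have hftcp : (∫ s in (0:ℝ)..r, pd s) = p r - p 0 := ftcICC hr hpD hpdCont
    -- ∫ g ≤ 2a∫m + 2b∫e - (e r - e 0) - 2(p r - p 0)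
    have hIg : (∫ s in (0:ℝ)..r, g s)
        ≤ 2 * (c₁ ^ 2 + c₄ / 2) * (∫ s in (0:ℝ)..r, m s)
          + 2 * (c₃ / 2 + c₄ / 2 + c₄ ^ 2) * (∫ s in (0:ℝ)..r, e s)
          - (e r - e 0) - 2 * (p r - p 0) := by
      have h1 : (∫ s in (0:ℝ)..r, g s)
          ≤ ∫ s in (0:ℝ)..r, (2 * (c₁ ^ 2 + c₄ / 2) * m s
              + 2 * (c₃ / 2 + c₄ / 2 + c₄ ^ 2) * e s - ed s - 2 * pd s) := by
        apply intervalIntegral.integral_mono_on hr.1 (intOf hr hgCont)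
        · exact ((((intOf hr hmCont).const_mul _).add
            ((intOf hr heCont).const_mul _)).sub (intOf hr hedCont)).sub
            ((intOf hr hpdCont).const_mul 2)
        · exact fun u hu => hkey u (hsub hu)
      have h2 : (∫ s in (0:ℝ)..r, (2 * (c₁ ^ 2 + c₄ / 2) * m s
              + 2 * (c₃ / 2 + c₄ / 2 + c₄ ^ 2) * e s - ed s - 2 * pd s))
          = 2 * (c₁ ^ 2 + c₄ / 2) * (∫ s in (0:ℝ)..r, m s)
            + 2 * (c₃ / 2 + c₄ / 2 + c₄ ^ 2) * (∫ s in (0:ℝ)..r, e s)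
            - (e r - e 0) - 2 * (p r - p 0) := by
        rw [intervalIntegral.integral_sub, intervalIntegral.integral_sub,
          intervalIntegral.integral_add, intervalIntegral.integral_const_mul,
          intervalIntegral.integral_const_mul, intervalIntegral.integral_const_mul,
          hftce, hftcp]
        · exact (intOf hr hmCont).const_mul _
        · exact (intOf hr heCont).const_mul _
        · exact ((intOf hr hmCont).const_mul _).add ((intOf hr heCont).const_mul _)
        · exact intOf hr hedCont
        · exact (((intOf hr hmCont).const_mul _).add
            ((intOf hr heCont).const_mul _)).sub (intOf hr hedCont)
        · exact (intOf hr hpdCont).const_mul 2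
      linarith
    -- boundary terms
    have hpr : |p r| ≤ c₄ ^ 2 * m r + e r / 4 := by
      have h1 := hbB r hr (α r) (α r)
      rw [← hmu r, ← heu r, ← hpu r] at h1
      exact h1.trans (sqrt_quarter c₄ (m r) (e r) (hm0 r hr) (he0 r hr))
    have hp0 : |p 0| ≤ c₄ / 2 * (m 0 + e 0) := by
      have h1 := hbB 0 hIcc (α 0) (α 0)
      rw [← hmu 0, ← heu 0, ← hpu 0] at h1
      exact h1.trans (sqrt_half c₄ (m 0) (e 0) hc₄ (hm0 0 hIcc) (he0 0 hIcc))
    have hmr := hmB r hr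
    have h0m := hm0 0 hIcc
    have h0e := he0 0 hIcc
    have hpr' := abs_le.1 hpr
    have hp0' := abs_le.1 hp0
    rw [hCbdef]
    linarith [mul_le_mul_of_nonneg_left hmr (by positivity : (0:ℝ) ≤ 2 * c₄ ^ 2),
      mul_le_mul_of_nonneg_left hIm (by positivity : (0:ℝ) ≤ 2 * (c₁ ^ 2 + c₄ / 2)),
      mul_le_mul_of_nonneg_left hIe
        (by positivity : (0:ℝ) ≤ 2 * (c₃ / 2 + c₄ / 2 + c₄ ^ 2)),
      he0 r hr,
      mul_nonneg (by positivity : (0:ℝ) ≤ 2 * (c₁ ^ 2 + c₄ / 2) * (T * C₀)) h0e,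
      mul_nonneg (by positivity : (0:ℝ)
        ≤ 2 * (c₃ / 2 + c₄ / 2 + c₄ ^ 2) * (1 + (c₁ + 2 * c₄ ^ 2) * (T * C₀))) h0e,
      mul_nonneg (by positivity : (0:ℝ) ≤ 2 * c₄ ^ 2 * C₀) h0e]
  -- conclude
  have hT' : T ∈ Icc (0:ℝ) T := right_mem_Icc.2 hT.le
  have hmainT := main T hT'
  have hmaint := main t ht
  have hg_nonneg : 0 ≤ ∫ s in (0:ℝ)..t, g s :=
    intervalIntegral.integral_nonneg ht.1 (fun u hu => hg0 u (hsubt hu))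
  have heT := he0 T hT'
  have h0m := hm0 0 hIcc
  have h0e := he0 0 hIcc
  have hfinal : (∫ s in (0:ℝ)..T, g s) + e t ≤ 3 * Cb * (m 0 + e 0) := by
    linarith [hmainT, hmaint, hg_nonneg, heT, mul_nonneg hCb (add_nonneg h0m h0e)]
  rw [hg_eq, hm_eq, he_eq] at hfinal
  exact hfinal
end

section
/- Let J, N ∈ ℕ with N ≥ 2, τ > 0, and for n = 0, …, N let M^n be real symmetric positive definite J×J matrices, S^n real symmetric positive semidefinite J×J matrices, and b^n : ℝ^J × ℝ^J → ℝ bilinear forms. Assume: (i) there is μ ≥ 0 such that for all n < N and all x, y ∈ ℝ^J, |(M^{n+1} − M^n) x·y| ≤ μ τ (M^n x·x)^{1/2} (M^n y·y)^{1/2}; (ii) there is c_b ≥ 0 such that for all n and all x, |b^n(x,x)| ≤ (1/2)(S^n x·x) + c_b (M^n x·x). Let U^0, …, U^N ∈ ℝ^J satisfy the BDF2 scheme: for n = 1, …, N−1 and all φ ∈ ℝ^J, (3/2)(M^{n+1} U^{n+1})·φ − 2(M^n U^n)·φ + (1/2)(M^{n−1} U^{n−1})·φ + τ ( (S^{n+1}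 U^{n+1})·φ + b^{n+1}(U^{n+1}, φ) ) = 0, and assume the starting bound M^1 U^1·U^1 ≤ c₀ (M^0 U^0·U^0) for some c₀ ≥ 0. Then there exist τ₀ > 0 and C ≥ 0, depending only on μ, c_b, c₀ and the product Nτ, such that whenever τ ≤ τ₀, for every n with 2 ≤ n ≤ N: M^n U^n·U^n + τ Σ_{i=2}^{n} S^i U^i·U^i ≤ C (M^0 U^0·U^0). -/
open Matrix

set_option maxHeartbeats 2000000

/-- L² stability bound for the fully discrete BDF2 ALE-ESFEM scheme in
matrix–vector form: there exist `τ₀ > 0` and `C ≥ 0` depending only on `μ`,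
`c_b`, `c₀` and `T = Nτ` such that, whenever `τ ≤ τ₀`, any solution `U` of the
BDF2 scheme with mass matrices `M^n` (symmetric positive definite, Lipschitz in
time), stiffness matrices `S^n` (symmetric positive semidefinite) and bounded
nonsymmetric bilinear forms `b^n` satisfying the starting bound
`M¹U¹·U¹ ≤ c₀ M⁰U⁰·U⁰` obeys
`MⁿUⁿ·Uⁿ + τ ∑_{i=2}^n SⁱUⁱ·Uⁱ ≤ C M⁰U⁰·U⁰` for all `2 ≤ n ≤ N`. -/
theorem bdf2_fully_discrete_L2_stability
    (μ c_b c₀ T : ℝ) (hμ : 0 ≤ μ) (hcb : 0 ≤ c_b) (hc₀ : 0 ≤ c₀) (hT : 0 < T) :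
    ∃ τ₀ : ℝ, 0 < τ₀ ∧ ∃ C : ℝ, 0 ≤ C ∧
      ∀ (J N : ℕ), 2 ≤ N → ∀ τ : ℝ, 0 < τ → τ ≤ τ₀ → (N : ℝ) * τ = T →
      ∀ (M S : ℕ → Matrix (Fin J) (Fin J) ℝ)
        (b : ℕ → (Fin J → ℝ) →ₗ[ℝ] (Fin J → ℝ) →ₗ[ℝ] ℝ),
        (∀ n ≤ N, (M n).PosDef) →
        (∀ n ≤ N, (S n).PosSemidef) →
        (∀ n < N, ∀ x y : Fin J → ℝ,
          |(M (n + 1) - M n).mulVec x ⬝ᵥ y|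
            ≤ μ * τ * Real.sqrt ((M n).mulVec x ⬝ᵥ x)
                * Real.sqrt ((M n).mulVec y ⬝ᵥ y)) →
        (∀ n ≤ N, ∀ x : Fin J → ℝ,
          |b n x x| ≤ (1 / 2) * ((S n).mulVec x ⬝ᵥ x)
            + c_b * ((M n).mulVec x ⬝ᵥ x)) →
        ∀ U : ℕ → Fin J → ℝ,
          (∀ n, 1 ≤ n → n < N → ∀ φ : Fin J → ℝ,
            (3 / 2) * ((M (n + 1)).mulVec (U (n + 1)) ⬝ᵥ φ)
                - 2 * ((M n).mulVec (U n) ⬝ᵥ φ)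
                + (1 / 2) * ((M (n - 1)).mulVec (U (n - 1)) ⬝ᵥ φ)
                + τ * ((S (n + 1)).mulVec (U (n + 1)) ⬝ᵥ φ
                    + b (n + 1) (U (n + 1)) φ) = 0) →
          (M 1).mulVec (U 1) ⬝ᵥ U 1 ≤ c₀ * ((M 0).mulVec (U 0) ⬝ᵥ U 0) →
          ∀ n, 2 ≤ n → n ≤ N →
            (M n).mulVec (U n) ⬝ᵥ U n
                + τ * ∑ i ∈ Finset.Icc 2 n, (S i).mulVec (U i) ⬝ᵥ U i
              ≤ C * ((M 0).mulVec (U 0) ⬝ᵥ U 0) := by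
  obtain ⟨L, hLdef⟩ : ∃ L : ℝ, L = 29 * μ + 4 * c_b + 1 := ⟨_, rfl⟩
  have hL1 : (1:ℝ) ≤ L := by rw [hLdef]; linarith
  have hL0 : (0:ℝ) < L := by linarith
  have hLne : L ≠ 0 := ne_of_gt hL0
  refine ⟨1 / (2 * L), one_div_pos.mpr (by linarith),
    Real.exp (4 * L * T) * (9 * c₀ + 3),
    mul_nonneg (Real.exp_nonneg _) (by linarith), ?_⟩
  intro J N hN τ hτ hττ₀ hNτ M S b hMpd hSpsd hlip hb U hsch hstart
  have hLτ : L * τ ≤ 1 / 2 := by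
    have h1 : L * τ ≤ L * (1 / (2 * L)) := mul_le_mul_of_nonneg_left hττ₀ hL0.le
    have h2 : L * (1 / (2 * L)) = 1 / 2 := by
      field_simp
    linarith
  have hμL : μ ≤ L := by rw [hLdef]; linarith
  have hμτ : μ * τ ≤ 1 / 2 := by
    have h1 : μ * τ ≤ L * τ := mul_le_mul_of_nonneg_right hμL hτ.le
    linarith
  have hμτ0 : 0 ≤ μ * τ := mul_nonneg hμ hτ.le
  have hLτ0 : 0 ≤ L * τ := mul_nonneg hL0.le hτ.le
  -- quadratic form notation
  obtain ⟨q, hq⟩ : ∃ q : ℕ → (Fin J → ℝ) → (Fin J → ℝ) → ℝ,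
      q = fun k x y => (M k).mulVec x ⬝ᵥ y := ⟨_, rfl⟩
  obtain ⟨sv, hsv⟩ : ∃ sv : ℕ → ℝ,
      sv = fun k => (S k).mulVec (U k) ⬝ᵥ U k := ⟨_, rfl⟩
  -- nonnegativity of the quadratic forms
  have hqnn : ∀ j, j ≤ N → ∀ x : Fin J → ℝ, 0 ≤ q j x x := by
    intro j hj x
    have h := (hMpd j hj).posSemidef.dotProduct_mulVec_nonneg x
    rw [star_trivial, dotProduct_comm] at h
    simpa only [hq] using h
  have hsnn : ∀ j, j ≤ N → 0 ≤ sv j := by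
    intro j hj
    have h := (hSpsd j hj).dotProduct_mulVec_nonneg (U j)
    rw [star_trivial, dotProduct_comm] at h
    simpa only [hsv] using h
  -- symmetry
  have hsymq : ∀ j, j ≤ N → ∀ x y : Fin J → ℝ, q j x y = q j y x := by
    intro j hj x y
    have hherm := (hMpd j hj).isHermitian
    have hsym : (M j)ᵀ = M j := by
      rw [← Matrix.conjTranspose_eq_transpose_of_trivial]; exact hherm
    simp only [hq]
    rw [dotProduct_comm, dotProduct_mulVec, ← mulVec_transpose, hsym]
  -- Lipschitz bound reformulated
  have hlips : ∀ j, j < N → ∀ x y : Fin J → ℝ,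
      |q (j+1) x y - q j x y|
        ≤ μ * τ * Real.sqrt (q j x x) * Real.sqrt (q j y y) := by
    intro j hj x y
    have h := hlip j hj x y
    rw [Matrix.sub_mulVec, sub_dotProduct] at h
    simpa only [hq] using h
  have sqrt_ineq : ∀ u v : ℝ, 0 ≤ u → 0 ≤ v →
      Real.sqrt u * Real.sqrt v ≤ (u + v) / 2 := by
    intro u v hu hv
    nlinarith [sq_nonneg (Real.sqrt u - Real.sqrt v), Real.sq_sqrt hu,
      Real.sq_sqrt hv, Real.sqrt_nonneg u, Real.sqrt_nonneg v]
  have hlip2 : ∀ j, j < N → ∀ x y : Fin J → ℝ,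
      |q (j+1) x y - q j x y| ≤ μ * τ * ((q j x x + q j y y) / 2) := by
    intro j hj x y
    have h1 := hlips j hj x y
    have h2 := sqrt_ineq (q j x x) (q j y y) (hqnn j hj.le x) (hqnn j hj.le y)
    have h3 : μ * τ * (Real.sqrt (q j x x) * Real.sqrt (q j y y))
        ≤ μ * τ * ((q j x x + q j y y) / 2) :=
      mul_le_mul_of_nonneg_left h2 hμτ0
    calc |q (j+1) x y - q j x y|
        ≤ μ * τ * Real.sqrt (q j x x) * Real.sqrt (q j y y) := h1
      _ = μ * τ * (Real.sqrt (q j x x) * Real.sqrt (q j y y)) := by ring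
      _ ≤ μ * τ * ((q j x x + q j y y) / 2) := h3
  have hlipd : ∀ j, j < N → ∀ x : Fin J → ℝ,
      |q (j+1) x x - q j x x| ≤ μ * τ * q j x x := by
    intro j hj x
    have h1 := hlips j hj x x
    have h2 : μ * τ * Real.sqrt (q j x x) * Real.sqrt (q j x x)
        = μ * τ * q j x x := by
      rw [mul_assoc, Real.mul_self_sqrt (hqnn j hj.le x)]
    linarith [h1]
  -- the BDF2 energy
  obtain ⟨E, hE⟩ : ∃ E : ℕ → ℝ, E = fun k =>
      (q k (U k) (U k)
        + q k ((2:ℝ) • U k - U (k-1)) ((2:ℝ) • U k - U (k-1))) / 4 := ⟨_, rfl⟩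
  have hEnn : ∀ j, j ≤ N → 0 ≤ E j := by
    intro j hj
    rw [hE]
    have h1 := hqnn j hj (U j)
    have h2 := hqnn j hj ((2:ℝ) • U j - U (j-1))
    simp only
    linarith
  have hmE : ∀ j, j ≤ N → q j (U j) (U j) ≤ 4 * E j := by
    intro j hj
    rw [hE]
    have h2 := hqnn j hj ((2:ℝ) • U j - U (j-1))
    simp only
    linarith
  -- the key one-step estimate
  have key : ∀ k, 1 ≤ k → k < N →
      E (k+1) + (τ/2) * sv (k+1) ≤ (1 + 4*(L*τ)) * E k := by
    intro k hk1 hkN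
    obtain ⟨j, rfl⟩ : ∃ j, k = j + 1 := ⟨k - 1, by omega⟩
    have hj2N : j + 1 + 1 ≤ N := by omega
    have hj1N : j + 1 < N := hkN
    have hjN : j < N := by omega
    obtain ⟨a, ha⟩ : ∃ v : Fin J → ℝ, v = U (j+1+1) := ⟨_, rfl⟩
    obtain ⟨c, hc⟩ : ∃ v : Fin J → ℝ, v = U (j+1) := ⟨_, rfl⟩
    obtain ⟨d, hd⟩ : ∃ v : Fin J → ℝ, v = U j := ⟨_, rfl⟩
    -- the scheme tested with a
    have e0 : (3/2) * q (j+1+1) a a - 2 * q (j+1) c a + (1/2) * q j d a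
        + τ * (sv (j+1+1) + b (j+1+1) a a) = 0 := by
      have h := hsch (j+1) (by omega) hj1N a
      simpa only [hq, hsv, ha, hc, hd, Nat.add_sub_cancel] using h
    -- the b-bound
    have hbB : |b (j+1+1) a a|
        ≤ (1/2) * sv (j+1+1) + c_b * q (j+1+1) a a := by
      have h := hb (j+1+1) hj2N a
      simpa only [hq, hsv, ha] using h
    -- energies in expanded form
    have hE'def : E (j+1+1) = (q (j+1+1) a a
        + q (j+1+1) ((2:ℝ) • a - c) ((2:ℝ) • a - c)) / 4 := by
      rw [hE]; simp only [ha, hc, Nat.add_sub_cancel]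
    have hEdef : E (j+1) = (q (j+1) c c
        + q (j+1) ((2:ℝ) • c - d) ((2:ℝ) • c - d)) / 4 := by
      rw [hE]; simp only [hc, hd, Nat.add_sub_cancel]
    -- expansions
    have hzexp : q (j+1+1) ((2:ℝ) • a - c) ((2:ℝ) • a - c)
        = 4 * q (j+1+1) a a - 2 * q (j+1+1) a c - 2 * q (j+1+1) c a
          + q (j+1+1) c c := by
      simp only [hq, Matrix.mulVec_add, Matrix.mulVec_sub, Matrix.mulVec_smul,
        add_dotProduct, sub_dotProduct, dotProduct_add, dotProduct_sub,
        smul_dotProduct, dotProduct_smul, smul_eq_mul]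
      ring
    have hwn1exp : q (j+1+1) ((2:ℝ) • c - d) ((2:ℝ) • c - d)
        = 4 * q (j+1+1) c c - 2 * q (j+1+1) c d - 2 * q (j+1+1) d c
          + q (j+1+1) d d := by
      simp only [hq, Matrix.mulVec_add, Matrix.mulVec_sub, Matrix.mulVec_smul,
        add_dotProduct, sub_dotProduct, dotProduct_add, dotProduct_sub,
        smul_dotProduct, dotProduct_smul, smul_eq_mul]
      ring
    have hwexp : q (j+1) ((2:ℝ) • c - d) ((2:ℝ) • c - d)
        = 4 * q (j+1) c c - 2 * q (j+1) c d - 2 * q (j+1) d c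
          + q (j+1) d d := by
      simp only [hq, Matrix.mulVec_add, Matrix.mulVec_sub, Matrix.mulVec_smul,
        add_dotProduct, sub_dotProduct, dotProduct_add, dotProduct_sub,
        smul_dotProduct, dotProduct_smul, smul_eq_mul]
      ring
    have hRexp : q (j+1+1) (a - (2:ℝ) • c + d) (a - (2:ℝ) • c + d)
        = q (j+1+1) a a - 2 * q (j+1+1) a c + q (j+1+1) a d
          - 2 * q (j+1+1) c a + 4 * q (j+1+1) c c - 2 * q (j+1+1) c d
          + q (j+1+1) d a - 2 * q (j+1+1) d c + q (j+1+1) d d := by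
      simp only [hq, Matrix.mulVec_add, Matrix.mulVec_sub, Matrix.mulVec_smul,
        add_dotProduct, sub_dotProduct, dotProduct_add, dotProduct_sub,
        smul_dotProduct, dotProduct_smul, smul_eq_mul]
      ring
    have h4cexp : q (j+1) ((4:ℝ) • c - d) ((4:ℝ) • c - d)
        = 16 * q (j+1) c c - 4 * q (j+1) c d - 4 * q (j+1) d c
          + q (j+1) d d := by
      simp only [hq, Matrix.mulVec_add, Matrix.mulVec_sub, Matrix.mulVec_smul,
        add_dotProduct, sub_dotProduct, dotProduct_add, dotProduct_sub,
        smul_dotProduct, dotProduct_smul, smul_eq_mul]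
      ring
    -- symmetry of the level-(j+2) form
    have sy1 : q (j+1+1) a c = q (j+1+1) c a := hsymq _ hj2N a c
    have sy2 : q (j+1+1) a d = q (j+1+1) d a := hsymq _ hj2N a d
    have sy3 : q (j+1+1) c d = q (j+1+1) d c := hsymq _ hj2N c d
    -- nonnegativity facts
    have hRnn : 0 ≤ q (j+1+1) (a - (2:ℝ) • c + d) (a - (2:ℝ) • c + d) :=
      hqnn _ hj2N _
    have h4cnn : 0 ≤ q (j+1) ((4:ℝ) • c - d) ((4:ℝ) • c - d) :=
      hqnn _ hj1N.le _
    have hZnn : 0 ≤ q (j+1+1) ((2:ℝ) • a - c) ((2:ℝ) • a - c) :=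
      hqnn _ hj2N _
    have hA1nn : 0 ≤ q (j+1+1) a a := hqnn _ hj2N a
    have hA0nn : 0 ≤ q (j+1) a a := hqnn _ hj1N.le a
    have hJaann : 0 ≤ q j a a := hqnn _ hjN.le a
    have hKccnn : 0 ≤ q (j+1) c c := hqnn _ hj1N.le c
    have hDnn : 0 ≤ q (j+1) d d := hqnn _ hj1N.le d
    have hJddnn : 0 ≤ q j d d := hqnn _ hjN.le d
    have hWnn : 0 ≤ q (j+1) ((2:ℝ) • c - d) ((2:ℝ) • c - d) :=
      hqnn _ hj1N.le _
    have hsvnn : 0 ≤ sv (j+1+1) := hsnn _ hj2N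
    -- Lipschitz comparisons between levels
    have hcc := abs_le.mp (hlipd (j+1) hj1N c)
    have hww := abs_le.mp (hlipd (j+1) hj1N ((2:ℝ) • c - d))
    have hca := abs_le.mp (hlip2 (j+1) hj1N c a)
    have hdaK := abs_le.mp (hlip2 (j+1) hj1N d a)
    have hdaJ := abs_le.mp (hlip2 j hjN d a)
    have haaA := abs_le.mp (hlipd (j+1) hj1N a)
    have haaJ := abs_le.mp (hlipd j hjN a)
    have hddJ := abs_le.mp (hlipd j hjN d)
    have hBabs := abs_le.mp hbB
    -- comparison inequalities
    have hA0le : q (j+1) a a ≤ 2 * q (j+1+1) a a := by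
      have h1 : 0 ≤ (1/2 - μ*τ) * q (j+1) a a :=
        mul_nonneg (by linarith) hA0nn
      linarith [haaA.1, h1]
    have hJaale : q j a a ≤ 2 * q (j+1) a a := by
      have h1 : 0 ≤ (1/2 - μ*τ) * q j a a := mul_nonneg (by linarith) hJaann
      linarith [haaJ.1, h1]
    have hJddle : q j d d ≤ 2 * q (j+1) d d := by
      have h1 : 0 ≤ (1/2 - μ*τ) * q j d d := mul_nonneg (by linarith) hJddnn
      linarith [hddJ.1, h1]
    have hDle : q (j+1) d d
        ≤ 8 * q (j+1) c c
          + 2 * q (j+1) ((2:ℝ) • c - d) ((2:ℝ) • c - d) := by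
      rw [h4cexp] at h4cnn
      rw [hwexp]
      linarith
    -- products needed by linarith
    have p1 : μ * τ * q (j+1) a a ≤ μ * τ * (2 * q (j+1+1) a a) :=
      mul_le_mul_of_nonneg_left hA0le hμτ0
    have p2 : μ * τ * q j a a ≤ μ * τ * (2 * q (j+1) a a) :=
      mul_le_mul_of_nonneg_left hJaale hμτ0
    have p3 : μ * τ * q j d d ≤ μ * τ * (2 * q (j+1) d d) :=
      mul_le_mul_of_nonneg_left hJddle hμτ0
    have p4 : μ * τ * q (j+1) d d
        ≤ μ * τ * (8 * q (j+1) c c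
          + 2 * q (j+1) ((2:ℝ) • c - d) ((2:ℝ) • c - d)) :=
      mul_le_mul_of_nonneg_left hDle hμτ0
    have pB1 : τ * b (j+1+1) a a
        ≤ τ * ((1/2) * sv (j+1+1) + c_b * q (j+1+1) a a) :=
      mul_le_mul_of_nonneg_left hBabs.2 hτ.le
    have pB2 : τ * (-((1/2) * sv (j+1+1) + c_b * q (j+1+1) a a))
        ≤ τ * b (j+1+1) a a :=
      mul_le_mul_of_nonneg_left hBabs.1 hτ.le
    have n1 : 0 ≤ μ * τ * q (j+1+1) a a := mul_nonneg hμτ0 hA1nn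
    have n2 : 0 ≤ μ * τ * q (j+1+1) ((2:ℝ) • a - c) ((2:ℝ) • a - c) :=
      mul_nonneg hμτ0 hZnn
    have n3 : 0 ≤ μ * τ * q (j+1) c c := mul_nonneg hμτ0 hKccnn
    have n4 : 0 ≤ μ * τ * q (j+1) ((2:ℝ) • c - d) ((2:ℝ) • c - d) :=
      mul_nonneg hμτ0 hWnn
    have n5 : 0 ≤ τ * q (j+1+1) a a := mul_nonneg hτ.le hA1nn
    have n6 : 0 ≤ τ * q (j+1+1) ((2:ℝ) • a - c) ((2:ℝ) • a - c) :=
      mul_nonneg hτ.le hZnn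
    have n7 : 0 ≤ τ * q (j+1) c c := mul_nonneg hτ.le hKccnn
    have n8 : 0 ≤ τ * q (j+1) ((2:ℝ) • c - d) ((2:ℝ) • c - d) :=
      mul_nonneg hτ.le hWnn
    have n9 : 0 ≤ c_b * (τ * q (j+1+1) a a) := mul_nonneg hcb n5
    have n10 : 0 ≤ c_b * (τ * q (j+1+1) ((2:ℝ) • a - c) ((2:ℝ) • a - c)) :=
      mul_nonneg hcb n6
    have n11 : 0 ≤ c_b * (τ * q (j+1) c c) := mul_nonneg hcb n7
    have n12 : 0 ≤ c_b * (τ * q (j+1) ((2:ℝ) • c - d) ((2:ℝ) • c - d)) :=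
      mul_nonneg hcb n8
    have n13 : 0 ≤ τ * sv (j+1+1) := mul_nonneg hτ.le hsvnn
    -- Stage A: the linear energy inequality
    have stageA : (1 - L*τ) * E (j+1+1) + (τ/2) * sv (j+1+1)
        ≤ (1 + L*τ) * E (j+1) := by
      rw [hE'def, hEdef, hLdef]
      linarith [e0, hzexp, hwn1exp, hRexp, sy1, sy2, sy3, hRnn,
        hcc.1, hcc.2, hww.1, hww.2, hca.1, hca.2, hdaK.1, hdaK.2,
        hdaJ.1, hdaJ.2, p1, p2, p3, p4, pB1, pB2, n1, n2, n3, n4, n5, n6,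
        n7, n8, n9, n10, n11, n12, n13, hWnn, hKccnn, hA1nn, hZnn, hsvnn]
    -- Stage B: absorb the implicit term
    have hEnn' : 0 ≤ E (j+1) := hEnn _ hj1N.le
    have hEnn'' : 0 ≤ E (j+1+1) := hEnn _ hj2N
    have htx : 0 ≤ (1/2 - L*τ) * E (j+1+1) :=
      mul_nonneg (by linarith) hEnn''
    have hty : 0 ≤ (1/2 - L*τ) * E (j+1) := mul_nonneg (by linarith) hEnn'
    have hσ : 0 ≤ (τ/2) * sv (j+1+1) :=
      mul_nonneg (by linarith) hsvnn
    have hx3 : E (j+1+1) ≤ 3 * E (j+1) := by linarith [stageA, htx, hty, hσ]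
    have hfin : L * τ * E (j+1+1) ≤ L * τ * (3 * E (j+1)) :=
      mul_le_mul_of_nonneg_left hx3 hLτ0
    linarith [stageA, hfin]
  -- the discrete Gronwall induction
  have claim : ∀ k, 1 ≤ k → k ≤ N →
      E k + (τ/2) * ∑ i ∈ Finset.Icc 2 k, sv i
        ≤ (1 + 4*(L*τ))^(k-1) * E 1 := by
    intro k
    induction k with
    | zero => intro h; omega
    | succ j ih =>
      intro _ hjN
      rcases Nat.lt_or_ge j 1 with hj0 | hj1
      · interval_cases j
        simp [Finset.Icc_eq_empty_of_lt]
      · have hjN' : j ≤ N := by omega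
        have hjltN : j < N := by omega
        have hkey := key j hj1 hjltN
        have hih := ih hj1 hjN'
        have hsum : ∑ i ∈ Finset.Icc 2 (j+1), sv i
            = (∑ i ∈ Finset.Icc 2 j, sv i) + sv (j+1) :=
          Finset.sum_Icc_succ_top (by omega) _
        have hsumnn : 0 ≤ ∑ i ∈ Finset.Icc 2 j, sv i :=
          Finset.sum_nonneg fun i hi => by
            have : i ≤ N := by
              have := (Finset.mem_Icc.mp hi).2; omega
            exact hsnn i this
        have hτs : (0:ℝ) ≤ τ/2 := by linarith
        have hpow : (1 + 4*(L*τ))^j = (1 + 4*(L*τ))^(j-1) * (1 + 4*(L*τ)) := by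
          have hj' : j - 1 + 1 = j := by omega
          conv_lhs => rw [← hj']
          rw [pow_succ]
        calc E (j+1) + (τ/2) * ∑ i ∈ Finset.Icc 2 (j+1), sv i
            = (E (j+1) + (τ/2) * sv (j+1))
              + (τ/2) * ∑ i ∈ Finset.Icc 2 j, sv i := by
              rw [hsum]; ring
          _ ≤ (1 + 4*(L*τ)) * E j
              + (1 + 4*(L*τ)) * ((τ/2) * ∑ i ∈ Finset.Icc 2 j, sv i) := by
              have h2 : (τ/2) * ∑ i ∈ Finset.Icc 2 j, sv i
                  ≤ (1 + 4*(L*τ)) * ((τ/2) * ∑ i ∈ Finset.Icc 2 j, sv i) := by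
                linarith [mul_nonneg hLτ0 (mul_nonneg hτs hsumnn),
                  mul_nonneg hτs hsumnn]
              linarith [hkey]
          _ = (1 + 4*(L*τ))
              * (E j + (τ/2) * ∑ i ∈ Finset.Icc 2 j, sv i) := by ring
          _ ≤ (1 + 4*(L*τ)) * ((1 + 4*(L*τ))^(j-1) * E 1) :=
              mul_le_mul_of_nonneg_left hih (by linarith)
          _ = (1 + 4*(L*τ))^j * E 1 := by rw [hpow]; ring
          _ = (1 + 4*(L*τ))^(j+1-1) * E 1 := by norm_num
  -- bound on the initial energy
  have hstart' : q 1 (U 1) (U 1) ≤ c₀ * q 0 (U 0) (U 0) := by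
    simpa only [hq] using hstart
  have hm0nn : 0 ≤ q 0 (U 0) (U 0) := hqnn 0 (by omega) (U 0)
  have hE1 : E 1 ≤ (9*c₀+3)/4 * q 0 (U 0) (U 0) := by
    have hE1def : E 1 = (q 1 (U 1) (U 1)
        + q 1 ((2:ℝ) • U 1 - U 0) ((2:ℝ) • U 1 - U 0)) / 4 := by
      rw [hE]
    have hpar1 : q 1 ((2:ℝ) • U 1 - U 0) ((2:ℝ) • U 1 - U 0)
        = 4 * q 1 (U 1) (U 1) - 2 * q 1 (U 1) (U 0) - 2 * q 1 (U 0) (U 1)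
          + q 1 (U 0) (U 0) := by
      simp only [hq, Matrix.mulVec_add, Matrix.mulVec_sub, Matrix.mulVec_smul,
        add_dotProduct, sub_dotProduct, dotProduct_add, dotProduct_sub,
        smul_dotProduct, dotProduct_smul, smul_eq_mul]
      ring
    have hpar2 : q 1 ((2:ℝ) • U 1 + U 0) ((2:ℝ) • U 1 + U 0)
        = 4 * q 1 (U 1) (U 1) + 2 * q 1 (U 1) (U 0) + 2 * q 1 (U 0) (U 1)
          + q 1 (U 0) (U 0) := by
      simp only [hq, Matrix.mulVec_add, Matrix.mulVec_sub, Matrix.mulVec_smul,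
        add_dotProduct, sub_dotProduct, dotProduct_add, dotProduct_sub,
        smul_dotProduct, dotProduct_smul, smul_eq_mul]
      ring
    have hpnn : 0 ≤ q 1 ((2:ℝ) • U 1 + U 0) ((2:ℝ) • U 1 + U 0) :=
      hqnn 1 (by omega) _
    have hlip0 := abs_le.mp (hlipd 0 (by omega) (U 0))
    have hmul : 0 ≤ (1/2 - μ*τ) * q 0 (U 0) (U 0) :=
      mul_nonneg (by linarith) hm0nn
    rw [hE1def, hpar1]
    rw [hpar2] at hpnn
    have h01 : q 1 (U 0) (U 0) ≤ (3/2) * q 0 (U 0) (U 0) := by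
      linarith [hlip0.2, hmul]
    linarith [hstart']
  have hE1nn : 0 ≤ E 1 := hEnn 1 (by omega)
  -- final assembly
  intro n hn2 hnN
  have hclaim := claim n (by omega) hnN
  have hpow_exp : (1 + 4*(L*τ))^(n-1) ≤ Real.exp (4*L*T) := by
    have h0 : (0:ℝ) ≤ 1 + 4*(L*τ) := by linarith
    have h1 : (1 + 4*(L*τ)) ≤ Real.exp (4*(L*τ)) := by
      linarith [Real.add_one_le_exp (4*(L*τ))]
    have h2 : (1 + 4*(L*τ))^(n-1) ≤ (Real.exp (4*(L*τ)))^(n-1) :=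
      pow_le_pow_left₀ h0 h1 _
    have h3 : (Real.exp (4*(L*τ)))^(n-1)
        = Real.exp (((n-1 : ℕ) : ℝ) * (4*(L*τ))) :=
      (Real.exp_nat_mul _ _).symm
    have h4 : ((n-1 : ℕ) : ℝ) * τ ≤ T := by
      rw [← hNτ]
      exact mul_le_mul_of_nonneg_right
        (Nat.cast_le.mpr (by omega)) hτ.le
    have h5 : ((n-1 : ℕ) : ℝ) * (4*(L*τ)) ≤ 4*L*T := by
      nlinarith [mul_le_mul_of_nonneg_left h4 (by linarith : (0:ℝ) ≤ 4*L)]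
    calc (1 + 4*(L*τ))^(n-1) ≤ (Real.exp (4*(L*τ)))^(n-1) := h2
      _ = Real.exp (((n-1 : ℕ) : ℝ) * (4*(L*τ))) := h3
      _ ≤ Real.exp (4*L*T) := Real.exp_le_exp.mpr h5
  have hsumnn : 0 ≤ ∑ i ∈ Finset.Icc 2 n, sv i :=
    Finset.sum_nonneg fun i hi => by
      have : i ≤ N := by have := (Finset.mem_Icc.mp hi).2; omega
      exact hsnn i this
  have hmn : q n (U n) (U n) ≤ 4 * E n := hmE n hnN
  have hfinal : q n (U n) (U n) + τ * ∑ i ∈ Finset.Icc 2 n, sv i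
      ≤ Real.exp (4*L*T) * (9*c₀+3) * q 0 (U 0) (U 0) := by
    have step1 : q n (U n) (U n) + τ * ∑ i ∈ Finset.Icc 2 n, sv i
        ≤ 4 * (E n + (τ/2) * ∑ i ∈ Finset.Icc 2 n, sv i) := by
      have h := mul_nonneg (by linarith : (0:ℝ) ≤ τ/2) hsumnn
      linarith
    have step2 : 4 * (E n + (τ/2) * ∑ i ∈ Finset.Icc 2 n, sv i)
        ≤ 4 * ((1 + 4*(L*τ))^(n-1) * E 1) := by linarith [hclaim]
    have step3 : (1 + 4*(L*τ))^(n-1) * E 1 ≤ Real.exp (4*L*T) * E 1 :=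
      mul_le_mul_of_nonneg_right hpow_exp hE1nn
    have step4 : Real.exp (4*L*T) * E 1
        ≤ Real.exp (4*L*T) * ((9*c₀+3)/4 * q 0 (U 0) (U 0)) :=
      mul_le_mul_of_nonneg_left hE1 (Real.exp_nonneg _)
    calc q n (U n) (U n) + τ * ∑ i ∈ Finset.Icc 2 n, sv i
        ≤ 4 * (E n + (τ/2) * ∑ i ∈ Finset.Icc 2 n, sv i) := step1
      _ ≤ 4 * ((1 + 4*(L*τ))^(n-1) * E 1) := step2
      _ ≤ 4 * (Real.exp (4*L*T) * E 1) := by linarith [step3]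
      _ ≤ 4 * (Real.exp (4*L*T) * ((9*c₀+3)/4 * q 0 (U 0) (U 0))) := by
          linarith [step4]
      _ = Real.exp (4*L*T) * (9*c₀+3) * q 0 (U 0) (U 0) := by ring
  calc (M n).mulVec (U n) ⬝ᵥ U n
      + τ * ∑ i ∈ Finset.Icc 2 n, (S i).mulVec (U i) ⬝ᵥ U i
      = q n (U n) (U n) + τ * ∑ i ∈ Finset.Icc 2 n, sv i := by
        simp only [hq, hsv]
    _ ≤ Real.exp (4*L*T) * (9*c₀+3) * q 0 (U 0) (U 0) := hfinal
    _ = Real.exp (4 * L * T) * (9 * c₀ + 3)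
        * ((M 0).mulVec (U 0) ⬝ᵥ U 0) := by simp only [hq]
end
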